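/- Let 1 ≤ p, and suppose U₁ ∈ ℝ^{n₁×d₁} satisfies α₁‖x‖_p ≤ ‖U₁x‖_p ≤ β₁‖x‖_p for all x ∈ ℝ^{d₁}, and U₂ ∈ ℝ^{n₂×d₂} satisfies α₂‖x‖_p ≤ ‖U₂x‖_p ≤ β₂‖x‖_p for all x ∈ ℝ^{d₂}. Then for all x ∈ ℝ^{d₁d₂}, α₁α₂‖x‖_p ≤ ‖(U₁ ⊗ U₂)x‖_p ≤ β₁β₂‖x‖_p. -/
import Mathlib


open Matrix Kronecker

/-- The vector `ℓ_p` norm: `(∑ i, |v i|^p)^(1/p)`. -/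
noncomputable def lpNorm {ι : Type*} [Fintype ι] (p : ℝ) (v : ι → ℝ) : ℝ :=
  (∑ i, |v i| ^ p) ^ (1 / p)

lemma sum_abs_rpow_nonneg {ι : Type*} [Fintype ι] (p : ℝ) (v : ι → ℝ) :
    0 ≤ ∑ i, |v i| ^ p :=
  Finset.sum_nonneg fun i _ => Real.rpow_nonneg (abs_nonneg _) _

lemma lpNorm_nonneg {ι : Type*} [Fintype ι] (p : ℝ) (v : ι → ℝ) : 0 ≤ lpNorm p v :=
  Real.rpow_nonneg (sum_abs_rpow_nonneg p v) _

lemma lpNorm_rpow {ι : Type*} [Fintype ι] {p : ℝ} (hp : 0 < p) (v : ι → ℝ) :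
    lpNorm p v ^ p = ∑ i, |v i| ^ p := by
  rw [lpNorm, ← Real.rpow_mul (sum_abs_rpow_nonneg p v), one_div,
    inv_mul_cancel₀ hp.ne', Real.rpow_one]

lemma lpNorm_prod_fst {ι κ : Type*} [Fintype ι] [Fintype κ] {p : ℝ} (hp : 0 < p)
    (v : ι × κ → ℝ) :
    lpNorm p v = (∑ i, lpNorm p (fun k => v (i, k)) ^ p) ^ (1 / p) := by
  simp_rw [lpNorm_rpow hp]
  rw [lpNorm, Fintype.sum_prod_type]

lemma lpNorm_prod_snd {ι κ : Type*} [Fintype ι] [Fintype κ] {p : ℝ} (hp : 0 < p)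
    (v : κ × ι → ℝ) :
    lpNorm p v = (∑ i, lpNorm p (fun k => v (k, i)) ^ p) ^ (1 / p) := by
  simp_rw [lpNorm_rpow hp]
  rw [lpNorm, Fintype.sum_prod_type_right]

lemma S_smul {ι : Type*} [Fintype ι] {p c : ℝ} (hp : 0 < p) (hc : 0 ≤ c) (a : ι → ℝ)
    (ha : ∀ i, 0 ≤ a i) :
    (∑ i, (c * a i) ^ p) ^ (1 / p) = c * (∑ i, a i ^ p) ^ (1 / p) := by
  have h1 : ∀ i, (c * a i) ^ p = c ^ p * a i ^ p := fun i => Real.mul_rpow hc (ha i)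
  simp_rw [h1]
  rw [← Finset.mul_sum, Real.mul_rpow (Real.rpow_nonneg hc p)
    (Finset.sum_nonneg fun i _ => Real.rpow_nonneg (ha i) p),
    ← Real.rpow_mul hc, mul_one_div_cancel hp.ne', Real.rpow_one]

lemma S_mono {ι : Type*} [Fintype ι] {p : ℝ} (hp : 0 < p) (a b : ι → ℝ)
    (ha : ∀ i, 0 ≤ a i) (hab : ∀ i, a i ≤ b i) :
    (∑ i, a i ^ p) ^ (1 / p) ≤ (∑ i, b i ^ p) ^ (1 / p) :=
  Real.rpow_le_rpow (Finset.sum_nonneg fun i _ => Real.rpow_nonneg (ha i) p)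
    (Finset.sum_le_sum fun i _ => Real.rpow_le_rpow (ha i) (hab i) hp.le)
    (by positivity)

lemma cond_fst {ι κ κ' : Type*} [Fintype ι] [Fintype κ] [Fintype κ'] {p α β : ℝ}
    (hp : 0 < p) (hα : 0 ≤ α) (hβ : 0 ≤ β)
    (f : ι × κ → ℝ) (g : ι × κ' → ℝ)
    (h : ∀ i, α * lpNorm p (fun k => f (i, k)) ≤ lpNorm p (fun k => g (i, k)) ∧
      lpNorm p (fun k => g (i, k)) ≤ β * lpNorm p (fun k => f (i, k))) :
    α * lpNorm p f ≤ lpNorm p g ∧ lpNorm p g ≤ β * lpNorm p f := by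
  rw [lpNorm_prod_fst hp f, lpNorm_prod_fst hp g,
    ← S_smul hp hα _ (fun i => lpNorm_nonneg p _),
    ← S_smul hp hβ _ (fun i => lpNorm_nonneg p _)]
  constructor
  · exact S_mono hp _ _ (fun i => mul_nonneg hα (lpNorm_nonneg p _)) (fun i => (h i).1)
  · exact S_mono hp _ _ (fun i => lpNorm_nonneg p _) (fun i => (h i).2)

lemma cond_snd {ι κ κ' : Type*} [Fintype ι] [Fintype κ] [Fintype κ'] {p α β : ℝ}
    (hp : 0 < p) (hα : 0 ≤ α) (hβ : 0 ≤ β)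
    (f : κ × ι → ℝ) (g : κ' × ι → ℝ)
    (h : ∀ i, α * lpNorm p (fun k => f (k, i)) ≤ lpNorm p (fun k => g (k, i)) ∧
      lpNorm p (fun k => g (k, i)) ≤ β * lpNorm p (fun k => f (k, i))) :
    α * lpNorm p f ≤ lpNorm p g ∧ lpNorm p g ≤ β * lpNorm p f := by
  rw [lpNorm_prod_snd hp f, lpNorm_prod_snd hp g,
    ← S_smul hp hα _ (fun i => lpNorm_nonneg p _),
    ← S_smul hp hβ _ (fun i => lpNorm_nonneg p _)]
  constructor
  · exact S_mono hp _ _ (fun i => mul_nonneg hα (lpNorm_nonneg p _)) (fun i => (h i).1)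
  · exact S_mono hp _ _ (fun i => lpNorm_nonneg p _) (fun i => (h i).2)

/-- If `U₁` is an `(ℓ_p, α₁, β₁)`-conditioned matrix and `U₂` is `(ℓ_p, α₂, β₂)`-conditioned,
then `U₁ ⊗ U₂` is `(ℓ_p, α₁α₂, β₁β₂)`-conditioned. -/
theorem stmt_5 (n₁ d₁ n₂ d₂ : ℕ) (p : ℝ) (hp : 1 ≤ p)
    (U₁ : Matrix (Fin n₁) (Fin d₁) ℝ) (U₂ : Matrix (Fin n₂) (Fin d₂) ℝ)
    (α₁ β₁ α₂ β₂ : ℝ) (hα₁ : 0 < α₁) (hα₂ : 0 < α₂)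
    (hαβ₁ : α₁ ≤ β₁) (hαβ₂ : α₂ ≤ β₂)
    (h₁ : ∀ x : Fin d₁ → ℝ, α₁ * lpNorm p x ≤ lpNorm p (U₁.mulVec x) ∧
      lpNorm p (U₁.mulVec x) ≤ β₁ * lpNorm p x)
    (h₂ : ∀ x : Fin d₂ → ℝ, α₂ * lpNorm p x ≤ lpNorm p (U₂.mulVec x) ∧
      lpNorm p (U₂.mulVec x) ≤ β₂ * lpNorm p x) :
    ∀ x : Fin d₁ × Fin d₂ → ℝ,
      α₁ * α₂ * lpNorm p x ≤ lpNorm p ((U₁ ⊗ₖ U₂).mulVec x) ∧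
      lpNorm p ((U₁ ⊗ₖ U₂).mulVec x) ≤ β₁ * β₂ * lpNorm p x := by
  intro x
  have hp0 : (0:ℝ) < p := lt_of_lt_of_le one_pos hp
  have hβ₁ : 0 ≤ β₁ := le_trans hα₁.le hαβ₁
  have hβ₂ : 0 ≤ β₂ := le_trans hα₂.le hαβ₂
  set z : Fin d₁ × Fin n₂ → ℝ := fun q => U₂.mulVec (fun j₂ => x (q.1, j₂)) q.2 with hz
  have hy : (U₁ ⊗ₖ U₂).mulVec x = fun q : Fin n₁ × Fin n₂ =>
      U₁.mulVec (fun j₁ => z (j₁, q.2)) q.1 := by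
    funext q
    obtain ⟨i₁, i₂⟩ := q
    simp only [Matrix.mulVec, dotProduct, kroneckerMap_apply, Fintype.sum_prod_type,
      hz]
    simp_rw [Finset.mul_sum, mul_assoc]
  have hzb : α₂ * lpNorm p x ≤ lpNorm p z ∧ lpNorm p z ≤ β₂ * lpNorm p x := by
    apply cond_fst hp0 hα₂.le hβ₂
    intro i
    exact h₂ (fun j₂ => x (i, j₂))
  have hyb : α₁ * lpNorm p z ≤ lpNorm p ((U₁ ⊗ₖ U₂).mulVec x) ∧
      lpNorm p ((U₁ ⊗ₖ U₂).mulVec x) ≤ β₁ * lpNorm p z := by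
    rw [hy]
    apply cond_snd hp0 hα₁.le (le_trans hα₁.le hαβ₁)
    intro i
    exact h₁ (fun j₁ => z (j₁, i))
  constructor
  · calc α₁ * α₂ * lpNorm p x = α₁ * (α₂ * lpNorm p x) := by ring
    _ ≤ α₁ * lpNorm p z := by
        exact mul_le_mul_of_nonneg_left hzb.1 hα₁.le
    _ ≤ _ := hyb.1
  · calc lpNorm p ((U₁ ⊗ₖ U₂).mulVec x) ≤ β₁ * lpNorm p z := hyb.2
    _ ≤ β₁ * (β₂ * lpNorm p x) := mul_le_mul_of_nonneg_left hzb.2 hβ₁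
    _ = β₁ * β₂ * lpNorm p x := by ring
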